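/- Let s₁, s₂, t be integers with t ≥ 1 and t ∣ (s₁·s₂ − 1). Then there exist a 3×3 integer matrix M with determinant equal to 1 or −1 and a vector v ∈ ℤ³ such that the affine map x ↦ M·x + v maps the set {(0,0,0), (1,0,0), (0,0,1), (s₂,t,1)} ⊂ ℤ³ bijectively onto the set {(0,0,0), (1,0,0), (0,0,1), (s₁,t,1)}; that is, the empty tetrahedra T(s₂,t) and T(s₁,t) are lattice equivalent. -/

import Mathlib

/-- If `t ∣ s₁·s₂ − 1` then the empty tetrahedra `T(s₂,t)` and `T(s₁,t)` are lattice equivalent via an affine unimodular transformation. -/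
theorem stmt9 (s₁ s₂ t : ℤ) (ht : 1 ≤ t) (h : t ∣ (s₁ * s₂ - 1)) :
    ∃ (M : Matrix (Fin 3) (Fin 3) ℤ) (v : Fin 3 → ℤ),
      (M.det = 1 ∨ M.det = -1) ∧
      Set.BijOn (fun x => M.mulVec x + v)
        ({![0,0,0], ![1,0,0], ![0,0,1], ![s₂,t,1]} : Set (Fin 3 → ℤ))
        ({![0,0,0], ![1,0,0], ![0,0,1], ![s₁,t,1]} : Set (Fin 3 → ℤ)) := by
  obtain ⟨k, hk⟩ := h
  set M : Matrix (Fin 3) (Fin 3) ℤ := ![![s₁, -k, 0], ![t, -s₂, 0], ![0, 0, -1]] with hM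
  set N : Matrix (Fin 3) (Fin 3) ℤ := ![![s₂, -k, 0], ![t, -s₁, 0], ![0, 0, -1]] with hN
  set v : Fin 3 → ℤ := ![0, 0, 1] with hv
  have hNM : N * M = 1 := by
    ext i j
    rw [Matrix.mul_apply]
    fin_cases i <;> fin_cases j <;>
      simp [hN, hM, Matrix.mul_apply, Fin.sum_univ_succ, Matrix.one_apply] <;> linarith
  have hinj : Function.Injective (fun x : Fin 3 → ℤ => M.mulVec x + v) := by
    intro x y hxy
    have h1 : M.mulVec x = M.mulVec y := by
      have := congrArg (fun z => z - v) hxy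
      simpa using this
    have h2 := congrArg N.mulVec h1
    simpa [Matrix.mulVec_mulVec, hNM] using h2
  have e0 : M.mulVec ![0,0,0] + v = ![0,0,1] := by
    funext i; fin_cases i <;>
      simp [hM, hv, Matrix.mulVec, dotProduct, Fin.sum_univ_succ]
  have e1 : M.mulVec ![1,0,0] + v = ![s₁,t,1] := by
    funext i; fin_cases i <;>
      simp [hM, hv, Matrix.mulVec, dotProduct, Fin.sum_univ_succ]
  have e2 : M.mulVec ![0,0,1] + v = ![0,0,0] := by
    funext i; fin_cases i <;>
      simp [hM, hv, Matrix.mulVec, dotProduct, Fin.sum_univ_succ]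
  have e3 : M.mulVec ![s₂,t,1] + v = ![1,0,0] := by
    funext i; fin_cases i <;>
      simp [hM, hv, Matrix.mulVec, dotProduct, Fin.sum_univ_succ] <;> linarith
  refine ⟨M, v, Or.inl ?_, ?_, fun x _ y _ hxy => hinj hxy, ?_⟩
  · rw [Matrix.det_fin_three]
    simp [hM]
    linarith
  · rintro x (rfl | rfl | rfl | rfl)
    · simp only [e0]; right; right; left; rfl
    · simp only [e1]; right; right; right; rfl
    · simp only [hv] at e2 ⊢; simp only [e2]; left; rfl
    · simp only [e3]; right; left; rfl
  · rintro y (rfl | rfl | rfl | rfl)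
    · exact ⟨![0,0,1], by right; right; left; rfl, e2⟩
    · exact ⟨![s₂,t,1], by right; right; right; rfl, e3⟩
    · exact ⟨![0,0,0], by left; rfl, e0⟩
    · exact ⟨![1,0,0], by right; left; rfl, e1⟩
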